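/- Let n ≥ 1 and let Φ ∈ COMFORT(Δ_n). Then for every x ∈ Δ_n and all indices i, j ∈ {0,…,n}: x_i = x_j if and only if Φ(x)_i = Φ(x)_j; equivalently, x_i < x_j if and only if Φ(x)_i < Φ(x)_j. In particular every maximal block of equal components of x is mapped to a maximal block of equal components of Φ(x) at the same (sorted) positions. -/

import Mathlib

open scoped BigOperators

noncomputable section

/-- `Spx k` is the standard simplex on `k` coordinates, i.e. the standard simplex
`Δ_{k-1}` of the paper, as a subspace of `ℝ^k`. -/
abbrev Spx (k : ℕ) : Type := {x : Fin k → ℝ // x ∈ stdSimplex ℝ (Fin k)}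

lemma perm_mem {k : ℕ} (ϑ : Equiv.Perm (Fin k)) {x : Fin k → ℝ}
    (hx : x ∈ stdSimplex ℝ (Fin k)) :
    (fun i => x (ϑ i)) ∈ stdSimplex ℝ (Fin k) :=
  ⟨fun i => hx.1 (ϑ i), (Equiv.sum_comp ϑ x).trans hx.2⟩

/-- membership of `COMFORT (Δ_n)`: a self-homeomorphism of the standard simplex which
(i) respects coordinate permutations and (ii) keeps the order. -/
structure IsComfort {n : ℕ} (F : Spx (n+1) ≃ₜ Spx (n+1)) : Prop where
  perm : ∀ (ϑ : Equiv.Perm (Fin (n+1))) (x : Spx (n+1)),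
      ((F ⟨fun i => x.1 (ϑ i), perm_mem ϑ x.2⟩ : Spx (n+1)) : Fin (n+1) → ℝ)
        = fun i => (F x).1 (ϑ i)
  mono : ∀ (x : Spx (n+1)) (i j : Fin (n+1)), x.1 i ≤ x.1 j → (F x).1 i ≤ (F x).1 j

/-- the `α`-cross `♣_{n,α}` of `Δ_n`. -/
def cross (n : ℕ) (α : ℝ) : Set (Spx (n+1)) := {x | ∃ j, x.1 j = α}

/-- the boundary `BOU_n = ♣_{n,0}` of `Δ_n`. -/
def bou (n : ℕ) : Set (Spx (n+1)) := cross n 0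

/-- the barycenter `Center_n` of `Δ_n`. -/
def center (n : ℕ) : Spx (n+1) :=
  ⟨fun _ => 1/((n:ℝ)+1), by
    constructor
    · intro i
      positivity
    · rw [Finset.sum_const, Finset.card_univ, Fintype.card_fin, nsmul_eq_mul]
      push_cast
      field_simp⟩

/-- the minimal coordinate of a point of `Δ_n`. -/
def minCoord {n : ℕ} (x : Spx (n+1)) : ℝ :=
  Finset.univ.inf' Finset.univ_nonempty x.1

/-- the `α`-layer `Layer_{n,α}` of `Δ_n`. -/
def layer (n : ℕ) (α : ℝ) : Set (Spx (n+1)) := {x | minCoord x = α}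

/-- `Sponge (Δ_n)`: the points of `Δ_n` with pairwise distinct coordinates. -/
def sponge (n : ℕ) : Set (Spx (n+1)) := {x | ∀ i j, x.1 i = x.1 j → i = j}

theorem comfort_preserves_coordinate_relations (n : ℕ) (hn : 1 ≤ n)
    (Φ : Spx (n+1) ≃ₜ Spx (n+1)) (hΦ : IsComfort Φ) :
    ∀ (x : Spx (n+1)) (i j : Fin (n+1)),
      (x.1 i = x.1 j ↔ (Φ x).1 i = (Φ x).1 j) ∧
      (x.1 i < x.1 j ↔ (Φ x).1 i < (Φ x).1 j) := by
  intro x i j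
  -- forward equality via mono
  have key : ∀ (y : Spx (n+1)) (a b : Fin (n+1)), y.1 a = y.1 b → (Φ y).1 a = (Φ y).1 b := by
    intro y a b h
    exact le_antisymm (hΦ.mono y a b h.le) (hΦ.mono y b a h.ge)
  have keyback : ∀ (y : Spx (n+1)) (a b : Fin (n+1)),
      (Φ y).1 a = (Φ y).1 b → y.1 a = y.1 b := by
    intro y a b h
    set σ := Equiv.swap a b
    set z : Spx (n+1) := ⟨fun k => y.1 (σ k), perm_mem σ y.2⟩ with hz
    have hperm := hΦ.perm σ y
    have hΦeq : Φ z = Φ y := by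
      apply Subtype.ext
      refine hperm.trans ?_
      funext k
      rcases eq_or_ne k a with rfl | hka
      · simpa [σ, Equiv.swap_apply_left] using h.symm
      rcases eq_or_ne k b with rfl | hkb
      · simpa [σ, Equiv.swap_apply_right] using h
      · simp [σ, Equiv.swap_apply_of_ne_of_ne hka hkb]
    have hzy : z = y := Φ.injective hΦeq
    have := congrFun (congrArg Subtype.val hzy) a
    simpa [hz, σ, Equiv.swap_apply_left] using this.symm
  constructor
  · exact ⟨key x i j, keyback x i j⟩
  · constructor
    · intro h
      refine lt_of_le_of_ne (hΦ.mono x i j h.le) fun he => h.ne (keyback x i j he)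
    · intro h
      rcases lt_trichotomy (x.1 i) (x.1 j) with h' | h' | h'
      · exact h'
      · exact absurd (key x i j h') h.ne
      · exact absurd (hΦ.mono x j i h'.le) (not_le.mpr h)

end
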